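/- Let x, a, b, c, d be five points of the Euclidean plane in general position (pairwise distinct, no three collinear), and consider the six segments of the bouquet configuration consisting of the two triangle loops [x,a], [a,b], [b,x] and [x,c], [c,d], [d,x]. Then the number of crossing pairs — unordered pairs of two of these six segments that share no endpoint and have nonempty intersection — is at most 3. -/

import Mathlib

/-- The closed segment spanned by a pair of points of the Euclidean plane. -/
def segOf (p : EuclideanSpace ℝ (Fin 2) × EuclideanSpace ℝ (Fin 2)) :
    Set (EuclideanSpace ℝ (Fin 2)) :=
  segment ℝ p.1 p.2

/-- Two segments (given by their endpoint pairs) share an endpoint. -/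
def SharesEndpoint (p q : EuclideanSpace ℝ (Fin 2) × EuclideanSpace ℝ (Fin 2)) : Prop :=
  p.1 = q.1 ∨ p.1 = q.2 ∨ p.2 = q.1 ∨ p.2 = q.2

/-- The planar cross product functional: an affine function of `p` vanishing on the
line through `a` and `b`. -/
noncomputable def cross (a b p : EuclideanSpace ℝ (Fin 2)) : ℝ :=
  (b 0 - a 0) * (p 1 - a 1) - (b 1 - a 1) * (p 0 - a 0)

lemma cross_comb {a b : EuclideanSpace ℝ (Fin 2)} {u v : ℝ} (huv : u + v = 1)
    (p q : EuclideanSpace ℝ (Fin 2)) :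
    cross a b (u • p + v • q) = u * cross a b p + v * cross a b q := by
  obtain rfl : v = 1 - u := by linarith
  simp [cross, PiLp.add_apply, PiLp.smul_apply, smul_eq_mul]
  ring

lemma cross_self_left (a b : EuclideanSpace ℝ (Fin 2)) : cross a b a = 0 := by
  simp [cross]

lemma cross_self_right (a b : EuclideanSpace ℝ (Fin 2)) : cross a b b = 0 := by
  simp [cross]; ring

lemma collinear_of_cross_eq_zero {a b p : EuclideanSpace ℝ (Fin 2)}
    (h : cross a b p = 0) : Collinear ℝ ({a, b, p} : Set (EuclideanSpace ℝ (Fin 2))) := by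
  by_cases hab : b = a
  · subst hab
    have : ({b, b, p} : Set (EuclideanSpace ℝ (Fin 2))) = {b, p} := by
      simp [Set.insert_comm]
    rw [this]
    exact collinear_pair ℝ b p
  rw [collinear_iff_of_mem (Set.mem_insert a _)]
  refine ⟨b - a, ?_⟩
  unfold cross at h
  intro z hz
  simp only [Set.mem_insert_iff, Set.mem_singleton_iff] at hz
  rcases hz with rfl | rfl | rfl
  · exact ⟨0, by simp⟩
  · exact ⟨1, by simp⟩
  · by_cases h0 : b 0 - a 0 ≠ 0
    · refine ⟨(z 0 - a 0) / (b 0 - a 0), ?_⟩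
      have key : ∀ i : Fin 2, z i = ((z 0 - a 0) / (b 0 - a 0)) * (b i - a i) + a i := by
        intro i
        fin_cases i <;> simp only [Fin.zero_eta, Fin.mk_one]
        · rw [div_mul_cancel₀ _ h0]; ring
        · field_simp; linarith [h]
      ext i
      simp [PiLp.add_apply, PiLp.smul_apply, smul_eq_mul, key i]
    · push_neg at h0
      have h1 : b 1 - a 1 ≠ 0 := by
        intro h1
        exact hab (PiLp.ext fun i => by fin_cases i <;> simp only [Fin.zero_eta, Fin.mk_one] <;> linarith)
      refine ⟨(z 1 - a 1) / (b 1 - a 1), ?_⟩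
      have key : ∀ i : Fin 2, z i = ((z 1 - a 1) / (b 1 - a 1)) * (b i - a i) + a i := by
        intro i
        fin_cases i <;> simp only [Fin.zero_eta, Fin.mk_one]
        · field_simp; nlinarith [h, h0]
        · rw [div_mul_cancel₀ _ h1]; ring
      ext i
      simp [PiLp.add_apply, PiLp.smul_apply, smul_eq_mul, key i]

lemma cross_ne_zero {a b p : EuclideanSpace ℝ (Fin 2)}
    (h : ¬ Collinear ℝ ({a, b, p} : Set (EuclideanSpace ℝ (Fin 2)))) :
    cross a b p ≠ 0 :=
  fun h0 => h (collinear_of_cross_eq_zero h0)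

lemma opp_sides {x a b c : EuclideanSpace ℝ (Fin 2)}
    (hx : cross a b x ≠ 0) (hc : cross a b c ≠ 0)
    (h : (segment ℝ x c ∩ segment ℝ a b).Nonempty) :
    cross a b c * cross a b x < 0 := by
  obtain ⟨R, hR1, hR2⟩ := h
  obtain ⟨u, v, hu, hv, huv, rfl⟩ := hR1
  obtain ⟨s, t, hs, ht, hst, hR⟩ := hR2
  have h0 : u * cross a b x + v * cross a b c = 0 := by
    rw [← cross_comb huv, ← hR, cross_comb hst, cross_self_left, cross_self_right]; ring
  set X := cross a b x with hX
  set C := cross a b c with hC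
  have heq2 : u * (X * X) + v * (C * X) = 0 := by linear_combination X * h0
  have hXX : 0 < X * X := mul_self_pos.mpr hx
  rcases (mul_ne_zero hc hx).lt_or_gt with h | h
  · exact h
  · exfalso
    have hu0 : u = 0 := by nlinarith
    have hv1 : v = 1 := by linarith
    rw [hu0, hv1] at heq2
    simp at heq2
    rcases heq2 with h'' | h''
    · exact hc h''
    · exact hx h''

/-- Key geometric lemma: if the segments `[x,c]` and `[x,d]` both meet the segment
`[a,b]` (all relevant triples being non-collinear), then the segment `[c,d]` lies
strictly on the far side of the line `ab` from `x`, hence misses `[x,a]`. -/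
lemma key_lemma {x a b c d : EuclideanSpace ℝ (Fin 2)}
    (hx : cross a b x ≠ 0) (hc : cross a b c ≠ 0) (hd : cross a b d ≠ 0)
    (h1 : (segment ℝ x c ∩ segment ℝ a b).Nonempty)
    (h2 : (segment ℝ x d ∩ segment ℝ a b).Nonempty) :
    segment ℝ c d ∩ segment ℝ x a = ∅ := by
  have hcx := opp_sides hx hc h1
  have hdx := opp_sides hx hd h2
  rw [Set.eq_empty_iff_forall_notMem]
  rintro P ⟨hPcd, hPxa⟩
  obtain ⟨s, t, hs, ht, hst, rfl⟩ := hPcd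
  obtain ⟨u, v, hu, hv, huv, hP⟩ := hPxa
  set X := cross a b x
  set C := cross a b c
  set D := cross a b d
  have e1 : cross a b (s • c + t • d) = s * C + t * D := cross_comb hst c d
  have e2 : cross a b (s • c + t • d) = u * X := by
    rw [← hP, cross_comb huv, cross_self_left]; ring
  have key : s * (C * X) + t * (D * X) = u * (X * X) := by
    linear_combination X * (e1.symm.trans e2)
  have hneg : s * (C * X) + t * (D * X) < 0 := by
    rcases eq_or_lt_of_le hs with h | h
    · have ht1 : t = 1 := by linarith
      rw [← h, ht1]; nlinarith
    · nlinarith [mul_nonpos_of_nonneg_of_nonpos ht hdx.le, mul_neg_of_pos_of_neg h hcx]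
  nlinarith [mul_nonneg hu (mul_self_nonneg X)]

lemma cv5 {al : Type*} (a0 a1 a2 a3 a4 a5 : al) : ![a0, a1, a2, a3, a4, a5] 5 = a5 := rfl

lemma ncard_triple_le {α : Type*} (p q r : α) : ({p, q, r} : Set α).ncard ≤ 3 := by
  refine le_trans (Set.ncard_insert_le _ _) ?_
  have h2 : ({q, r} : Set α).ncard ≤ 2 :=
    le_trans (Set.ncard_insert_le _ _) (by simp)
  omega

/-- The set of crossing pairs of the bouquet configuration. -/
def crossingSet (x a b c d : EuclideanSpace ℝ (Fin 2)) : Set (Fin 6 × Fin 6) :=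
  {p : Fin 6 × Fin 6 | p.1 < p.2 ∧
    ¬ SharesEndpoint (![(x, a), (a, b), (b, x), (x, c), (c, d), (d, x)] p.1)
      (![(x, a), (a, b), (b, x), (x, c), (c, d), (d, x)] p.2) ∧
    (segOf (![(x, a), (a, b), (b, x), (x, c), (c, d), (d, x)] p.1) ∩
      segOf (![(x, a), (a, b), (b, x), (x, c), (c, d), (d, x)] p.2)).Nonempty}

set_option maxHeartbeats 1000000 in
/-- For five points `x, a, b, c, d` in general position in the plane, the six segments of
the bouquet configuration (two triangle loops `[x,a], [a,b], [b,x]` and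
`[x,c], [c,d], [d,x]`) have at most 3 crossing pairs: unordered pairs of segments
sharing no endpoint and having nonempty intersection. -/
theorem bouquet_six_sticks_crossings_le_three
    (x a b c d : EuclideanSpace ℝ (Fin 2))
    (hdist : ∀ i j : Fin 5, i ≠ j → ![x, a, b, c, d] i ≠ ![x, a, b, c, d] j)
    (hcol : ∀ i j k : Fin 5, i ≠ j → j ≠ k → i ≠ k →
      ¬ Collinear ℝ ({![x, a, b, c, d] i, ![x, a, b, c, d] j,
        ![x, a, b, c, d] k} : Set (EuclideanSpace ℝ (Fin 2)))) :
    ({p : Fin 6 × Fin 6 | p.1 < p.2 ∧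
        ¬ SharesEndpoint (![(x, a), (a, b), (b, x), (x, c), (c, d), (d, x)] p.1)
          (![(x, a), (a, b), (b, x), (x, c), (c, d), (d, x)] p.2) ∧
        (segOf (![(x, a), (a, b), (b, x), (x, c), (c, d), (d, x)] p.1) ∩
          segOf (![(x, a), (a, b), (b, x), (x, c), (c, d), (d, x)] p.2)).Nonempty}).ncard
      ≤ 3 := by
  show (crossingSet x a b c d).ncard ≤ 3
  -- cross-product nonvanishing facts from general position
  have nabx : cross a b x ≠ 0 := cross_ne_zero (by simpa using hcol 1 2 0 (by decide) (by decide) (by decide))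
  have nabc : cross a b c ≠ 0 := cross_ne_zero (by simpa using hcol 1 2 3 (by decide) (by decide) (by decide))
  have nabd : cross a b d ≠ 0 := cross_ne_zero (by simpa using hcol 1 2 4 (by decide) (by decide) (by decide))
  have nbax : cross b a x ≠ 0 := cross_ne_zero (by simpa using hcol 2 1 0 (by decide) (by decide) (by decide))
  have nbac : cross b a c ≠ 0 := cross_ne_zero (by simpa using hcol 2 1 3 (by decide) (by decide) (by decide))
  have nbad : cross b a d ≠ 0 := cross_ne_zero (by simpa using hcol 2 1 4 (by decide) (by decide) (by decide))
  have ncdx : cross c d x ≠ 0 := cross_ne_zero (by simpa using hcol 3 4 0 (by decide) (by decide) (by decide))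
  have ncda : cross c d a ≠ 0 := cross_ne_zero (by simpa using hcol 3 4 1 (by decide) (by decide) (by decide))
  have ncdb : cross c d b ≠ 0 := cross_ne_zero (by simpa using hcol 3 4 2 (by decide) (by decide) (by decide))
  have ndcx : cross d c x ≠ 0 := cross_ne_zero (by simpa using hcol 4 3 0 (by decide) (by decide) (by decide))
  have ndca : cross d c a ≠ 0 := cross_ne_zero (by simpa using hcol 4 3 1 (by decide) (by decide) (by decide))
  have ndcb : cross d c b ≠ 0 := cross_ne_zero (by simpa using hcol 4 3 2 (by decide) (by decide) (by decide))
  clear hdist hcol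
  by_cases hB : (segment ℝ x a ∩ segment ℝ c d).Nonempty ∧
      (segment ℝ b x ∩ segment ℝ c d).Nonempty
  · -- both [x,a] and [x,b] cross [c,d]; then [a,b] misses [x,c] and [x,d]
    obtain ⟨hB1, hB2⟩ := hB
    have hB2' : (segment ℝ x b ∩ segment ℝ c d).Nonempty := by
      rwa [segment_symm] at hB2
    have hE13 : segment ℝ a b ∩ segment ℝ x c = ∅ :=
      key_lemma ncdx ncda ncdb hB1 hB2'
    have hE15 : segment ℝ a b ∩ segment ℝ d x = ∅ := by
      have hB1' : (segment ℝ x a ∩ segment ℝ d c).Nonempty := by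
        rwa [segment_symm ℝ d c]
      have hB2'' : (segment ℝ x b ∩ segment ℝ d c).Nonempty := by
        rwa [segment_symm ℝ d c]
      have := key_lemma ndcx ndca ndcb hB1' hB2''
      rwa [segment_symm ℝ x d] at this
    clear nabx nabc nabd nbax nbac nbad ncdx ncda ncdb ndcx ndca ndcb hB1 hB2 hB2'
    have hsub : crossingSet x a b c d ⊆ ({(0, 4), (2, 4), (1, 4)} : Set (Fin 6 × Fin 6)) := by
      rintro ⟨i, j⟩ ⟨h1, h2, h3⟩
      fin_cases i <;> fin_cases j <;>
        simp_all [SharesEndpoint, segOf, Set.not_nonempty_empty, cv5]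
    exact le_trans (Set.ncard_le_ncard hsub (Set.toFinite _)) (ncard_triple_le _ _ _)
  · by_cases hA : (segment ℝ a b ∩ segment ℝ x c).Nonempty ∧
        (segment ℝ a b ∩ segment ℝ d x).Nonempty
    · -- [a,b] crosses both [x,c] and [x,d]; then [c,d] misses [x,a] and [x,b]
      obtain ⟨hA1, hA2⟩ := hA
      have hA1' : (segment ℝ x c ∩ segment ℝ a b).Nonempty := by
        rwa [Set.inter_comm] at hA1
      have hA2' : (segment ℝ x d ∩ segment ℝ a b).Nonempty := by
        rw [Set.inter_comm] at hA2; rwa [segment_symm ℝ d x] at hA2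
      have hE04 : segment ℝ x a ∩ segment ℝ c d = ∅ := by
        have := key_lemma nabx nabc nabd hA1' hA2'
        rwa [Set.inter_comm] at this
      have hE24 : segment ℝ b x ∩ segment ℝ c d = ∅ := by
        have hA1'' : (segment ℝ x c ∩ segment ℝ b a).Nonempty := by
          rwa [segment_symm ℝ b a]
        have hA2'' : (segment ℝ x d ∩ segment ℝ b a).Nonempty := by
          rwa [segment_symm ℝ b a]
        have := key_lemma nbax nbac nbad hA1'' hA2''
        rw [Set.inter_comm] at this
        rwa [segment_symm ℝ x b] at this
      clear nabx nabc nabd nbax nbac nbad ncdx ncda ncdb ndcx ndca ndcb hA1 hA2 hA1' hA2'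
      have hsub : crossingSet x a b c d ⊆ ({(1, 3), (1, 4), (1, 5)} : Set (Fin 6 × Fin 6)) := by
        rintro ⟨i, j⟩ ⟨h1, h2, h3⟩
        fin_cases i <;> fin_cases j <;>
          simp_all [SharesEndpoint, segOf, Set.not_nonempty_empty, cv5]
      exact le_trans (Set.ncard_le_ncard hsub (Set.toFinite _)) (ncard_triple_le _ _ _)
    · rw [not_and_or] at hB hA
      rcases hB with hB | hB <;> rcases hA with hA | hA <;>
        rw [Set.not_nonempty_iff_eq_empty] at hB hA
      · clear nabx nabc nabd nbax nbac nbad ncdx ncda ncdb ndcx ndca ndcb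
        have hsub : crossingSet x a b c d ⊆ ({(2, 4), (1, 4), (1, 5)} : Set (Fin 6 × Fin 6)) := by
          rintro ⟨i, j⟩ ⟨h1, h2, h3⟩
          fin_cases i <;> fin_cases j <;>
            simp_all [SharesEndpoint, segOf, Set.not_nonempty_empty, cv5]
        exact le_trans (Set.ncard_le_ncard hsub (Set.toFinite _)) (ncard_triple_le _ _ _)
      · clear nabx nabc nabd nbax nbac nbad ncdx ncda ncdb ndcx ndca ndcb
        have hsub : crossingSet x a b c d ⊆ ({(2, 4), (1, 3), (1, 4)} : Set (Fin 6 × Fin 6)) := by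
          rintro ⟨i, j⟩ ⟨h1, h2, h3⟩
          fin_cases i <;> fin_cases j <;>
            simp_all [SharesEndpoint, segOf, Set.not_nonempty_empty, cv5]
        exact le_trans (Set.ncard_le_ncard hsub (Set.toFinite _)) (ncard_triple_le _ _ _)
      · clear nabx nabc nabd nbax nbac nbad ncdx ncda ncdb ndcx ndca ndcb
        have hsub : crossingSet x a b c d ⊆ ({(0, 4), (1, 4), (1, 5)} : Set (Fin 6 × Fin 6)) := by
          rintro ⟨i, j⟩ ⟨h1, h2, h3⟩
          fin_cases i <;> fin_cases j <;>
            simp_all [SharesEndpoint, segOf, Set.not_nonempty_empty, cv5]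
        exact le_trans (Set.ncard_le_ncard hsub (Set.toFinite _)) (ncard_triple_le _ _ _)
      · clear nabx nabc nabd nbax nbac nbad ncdx ncda ncdb ndcx ndca ndcb
        have hsub : crossingSet x a b c d ⊆ ({(0, 4), (1, 3), (1, 4)} : Set (Fin 6 × Fin 6)) := by
          rintro ⟨i, j⟩ ⟨h1, h2, h3⟩
          fin_cases i <;> fin_cases j <;>
            simp_all [SharesEndpoint, segOf, Set.not_nonempty_empty, cv5]
        exact le_trans (Set.ncard_le_ncard hsub (Set.toFinite _)) (ncard_triple_le _ _ _)
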